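/- Let I = (N, S, T, M) be a network coding instance that is (ε, R, n)-feasible with a corresponding network code {X_f : f ∈ S ∪ E}, and let e* be an edge of I with capacity R_{e*}. Suppose there exists a random variable Y = f_Y(X_S) (a deterministic function of the source message vector X_S) with support 𝒴 such that: (A) H(X_{e*} | Y) = 0; (B) H(X_S | Y) = Σ_{i∈S} H(X_i | Y); and (C) there exists y' ∈ 𝒴 such that |A_i(y')| ≥ |𝒳_i| / |𝒳_{e*}| for every source i ∈ S and |A^B(y')| ≤ ε·|A(y')|. Then the instance I' obtained from I by removing edge e* is (ε, R − R_{e*}·1, n)-feasible, where (R − R_{e*}·1)_i = max(0, R_i − R_{e*}). -/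

import Mathlib

open scoped Classical
open Finset

noncomputable section

/-- A network coding instance `I = (N, S, T, M)`: a finite directed acyclic graph with
edge capacities, source nodes (no incoming edges), terminal nodes (no outgoing edges),
and a demand relation (`demands s t` means terminal `t` demands source `s`). -/
structure NetworkInstance where
  V : Type
  [fintypeV : Fintype V]
  [decEqV : DecidableEq V]
  E : Finset (V × V)
  cap : V × V → ℝ
  cap_pos : ∀ e ∈ E, 0 < cap e
  S : Finset V
  T : Finset V
  demands : V → V → Prop
  src_no_in : ∀ s ∈ S, ∀ e ∈ E, e.2 ≠ s
  ter_no_out : ∀ t ∈ T, ∀ e ∈ E, e.1 ≠ t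
  disjointST : Disjoint S T
  acyclic : ∃ ord : V → ℕ, ∀ e ∈ E, ord e.1 < ord e.2

attribute [instance] NetworkInstance.fintypeV NetworkInstance.decEqV

/-- A network code of blocklength `n` and rate vector `R` on the instance `I`.
Sources are independent and uniform on their (finite, nonempty) alphabets, which is modelled
by taking the whole product of the source alphabets as the (uniform) sample space.
`ge e` is the global encoding function of edge `e` (a function of the source message vector),
`dec t` the decoding function of terminal `t` (a function of the messages on incoming edges
of `t`, producing reconstructions of the demanded sources).
`local_enc` states that the message on an edge `e = (u,v)` is determined by the messages on
the incoming edges of `u` (together with the source message at `u`, when `u` is a source).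
`rate` states `H(X_i) = log₂|𝒳_i| ≥ n·R_i`, and `capBound` states `log₂|𝒳_e| ≤ n·R_e`. -/
structure NetworkCode (I : NetworkInstance) (R : I.V → ℝ) (n : ℕ) where
  srcA : I.V → Type
  edgeA : I.V × I.V → Type
  [finSrc : ∀ v, Fintype (srcA v)]
  [finEdge : ∀ e, Fintype (edgeA e)]
  [neSrc : ∀ v, Nonempty (srcA v)]
  [neEdge : ∀ e, Nonempty (edgeA e)]
  ge : (e : I.V × I.V) → ((s : {v // v ∈ I.S}) → srcA s.1) → edgeA e
  dec : (t : {v // v ∈ I.T}) →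
    ((f : {e : I.V × I.V // e ∈ I.E ∧ e.2 = t.1}) → edgeA f.1) →
    ((s : {v // v ∈ I.S ∧ I.demands v t.1}) → srcA s.1)
  local_enc : ∀ e ∈ I.E, ∀ x y : ((s : {v // v ∈ I.S}) → srcA s.1),
    (∀ s : {v // v ∈ I.S}, (s : I.V) = e.1 → x s = y s) →
    (∀ f ∈ I.E, f.2 = e.1 → ge f x = ge f y) →
    ge e x = ge e y
  rate : ∀ v ∈ I.S, (2 : ℝ) ^ ((n : ℝ) * R v) ≤ Fintype.card (srcA v)
  capBound : ∀ e ∈ I.E, (Fintype.card (edgeA e) : ℝ) ≤ (2 : ℝ) ^ ((n : ℝ) * I.cap e)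

attribute [instance] NetworkCode.finSrc NetworkCode.finEdge NetworkCode.neSrc NetworkCode.neEdge

/-- The source message vector space `𝒳_S = ∏ 𝒳_i`; the sources being independent and
uniform, the probability space is the uniform distribution on `Msg`. -/
abbrev NetworkCode.Msg {I : NetworkInstance} {R : I.V → ℝ} {n : ℕ} (C : NetworkCode I R n) : Type :=
  (s : {v // v ∈ I.S}) → C.srcA s.1

/-- Terminal `t` decodes the source vector `x` correctly. -/
def NetworkCode.Correct {I : NetworkInstance} {R : I.V → ℝ} {n : ℕ} (C : NetworkCode I R n)
    (t : {v // v ∈ I.T}) (x : C.Msg) : Prop :=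
  C.dec t (fun f => C.ge f.1 x) = fun s : {v : I.V // v ∈ I.S ∧ I.demands v t.1} => x ⟨s.1, s.2.1⟩

/-- `x` is "good": every terminal decodes it correctly. -/
def NetworkCode.Good {I : NetworkInstance} {R : I.V → ℝ} {n : ℕ} (C : NetworkCode I R n)
    (x : C.Msg) : Prop := ∀ t, C.Correct t x

/-- The code has decoding error probability at most `ε` at every terminal
(w.r.t. the uniform distribution on source messages). -/
def NetworkCode.Achieves {I : NetworkInstance} {R : I.V → ℝ} {n : ℕ} (C : NetworkCode I R n)
    (ε : ℝ) : Prop :=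
  ∀ t : {v // v ∈ I.T},
    ((Finset.univ.filter fun x : C.Msg => ¬ C.Correct t x).card : ℝ) ≤ ε * Fintype.card C.Msg

/-- `I` is `(ε, R, n)`-feasible. -/
def Feasible (I : NetworkInstance) (ε : ℝ) (R : I.V → ℝ) (n : ℕ) : Prop :=
  ∃ C : NetworkCode I R n, C.Achieves ε

/-- The instance `I'` obtained from `I` by removing the edge `e`. -/
def NetworkInstance.removeEdge (I : NetworkInstance) (e : I.V × I.V) : NetworkInstance where
  V := I.V
  fintypeV := I.fintypeV
  decEqV := I.decEqV
  E := I.E.erase e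
  cap := I.cap
  cap_pos := fun f hf => I.cap_pos f (Finset.mem_of_mem_erase hf)
  S := I.S
  T := I.T
  demands := I.demands
  src_no_in := fun s hs f hf => I.src_no_in s hs f (Finset.mem_of_mem_erase hf)
  ter_no_out := fun t ht f hf => I.ter_no_out t ht f (Finset.mem_of_mem_erase hf)
  disjointST := I.disjointST
  acyclic := ⟨I.acyclic.choose, fun f hf => I.acyclic.choose_spec f (Finset.mem_of_mem_erase hf)⟩

/-- The reduced rate vector `R - R_{e*}·1`, i.e. `i ↦ max 0 (R_i - R_{e*})`. -/
def reducedRate (I : NetworkInstance) (R : I.V → ℝ) (e : I.V × I.V) : I.V → ℝ :=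
  fun v => max 0 (R v - I.cap e)

/-- Probability that the random variable `Z` (on the finite uniform sample space `Ω`)
takes the value `z`. -/
def prob {Ω : Type*} [Fintype Ω] {α : Type*} (Z : Ω → α) (z : α) : ℝ :=
  ((Finset.univ.filter fun ω => Z ω = z).card : ℝ) / (Fintype.card Ω : ℝ)

/-- Shannon entropy (in bits) of a random variable `Z` on the finite uniform sample space `Ω`. -/
def Hent {Ω : Type*} [Fintype Ω] {α : Type*} [Fintype α] (Z : Ω → α) : ℝ :=
  (∑ z : α, Real.negMulLog (prob Z z)) / Real.log 2

/-- Conditional Shannon entropy `H(Z | W) = H(Z, W) - H(W)`. -/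
def condH {Ω : Type*} [Fintype Ω] {α β : Type*} [Fintype α] [Fintype β]
    (Z : Ω → α) (W : Ω → β) : ℝ :=
  Hent (fun ω => (Z ω, W ω)) - Hent W

lemma term_le {x T : ℝ} (hx : 0 ≤ x) (hxT : x ≤ T) : -x * Real.log T ≤ Real.negMulLog x := by
  rcases eq_or_lt_of_le hx with h | h
  · simp [← h]
  · simp only [Real.negMulLog, neg_mul]
    nlinarith [Real.log_le_log h hxT]

lemma negMulLog_sum_le {α : Type*} (s : Finset α) (f : α → ℝ) (h0 : ∀ a ∈ s, 0 ≤ f a) :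
    Real.negMulLog (∑ a ∈ s, f a) ≤ ∑ a ∈ s, Real.negMulLog (f a) := by
  have hT : Real.negMulLog (∑ a ∈ s, f a) = ∑ a ∈ s, (-(f a) * Real.log (∑ b ∈ s, f b)) := by
    rw [Real.negMulLog, ← Finset.sum_neg_distrib, Finset.sum_mul]
  rw [hT]
  refine Finset.sum_le_sum fun a ha => term_le (h0 a ha) ?_
  exact Finset.single_le_sum h0 ha

lemma negMulLog_sum_lt {α : Type*} (s : Finset α) (f : α → ℝ) (h0 : ∀ a ∈ s, 0 ≤ f a)
    {a b : α} (ha : a ∈ s) (hb : b ∈ s) (hab : a ≠ b) (hfa : 0 < f a) (hfb : 0 < f b) :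
    Real.negMulLog (∑ a ∈ s, f a) < ∑ a ∈ s, Real.negMulLog (f a) := by
  have hT : Real.negMulLog (∑ a ∈ s, f a) = ∑ a ∈ s, (-(f a) * Real.log (∑ b ∈ s, f b)) := by
    rw [Real.negMulLog, ← Finset.sum_neg_distrib, Finset.sum_mul]
  rw [hT]
  refine Finset.sum_lt_sum (fun c hc => term_le (h0 c hc) (Finset.single_le_sum h0 hc)) ⟨a, ha, ?_⟩
  have hlt : f a < ∑ c ∈ s, f c := by
    have : f a + f b ≤ ∑ c ∈ s, f c := by
      rw [← Finset.sum_pair hab]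
      exact Finset.sum_le_sum_of_subset_of_nonneg (by intro c hc; simp at hc; rcases hc with h|h <;> simp [h, ha, hb]) (fun c hc _ => h0 c hc)
    linarith
  have := Real.log_lt_log hfa hlt
  simp only [Real.negMulLog, neg_mul]
  nlinarith

lemma prob_nonneg {Ω : Type*} [Fintype Ω] {α : Type*} (Z : Ω → α) (z : α) : 0 ≤ prob Z z :=
  div_nonneg (Nat.cast_nonneg _) (Nat.cast_nonneg _)

lemma prob_pos {Ω : Type*} [Fintype Ω] {α : Type*} (Z : Ω → α) (ω : Ω) : 0 < prob Z (Z ω) := by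
  have hΩ : 0 < (Fintype.card Ω : ℝ) := by
    have : Nonempty Ω := ⟨ω⟩
    exact_mod_cast Fintype.card_pos
  apply div_pos _ hΩ
  have : ω ∈ Finset.univ.filter fun ω' => Z ω' = Z ω := by simp
  exact_mod_cast Finset.card_pos.mpr ⟨ω, this⟩

lemma prob_snd_eq_sum {Ω α β : Type*} [Fintype Ω] [Fintype α] (Z : Ω → α) (W : Ω → β) (w : β) :
    prob W w = ∑ z : α, prob (fun ω => (Z ω, W ω)) (z, w) := by
  unfold prob
  rw [← Finset.sum_div]
  congr 1
  push_cast
  rw [Finset.card_eq_sum_card_fiberwise (f := Z) (t := Finset.univ) (fun x _ => Finset.mem_univ _)]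
  push_cast
  refine Finset.sum_congr rfl fun z _ => ?_
  congr 1
  rw [Finset.filter_filter]
  congr 1
  ext ω
  simp [Prod.ext_iff, and_comm]

lemma determ_of_condH_zero {Ω α β : Type*} [Fintype Ω] [Fintype α] [Fintype β]
    (Z : Ω → α) (W : Ω → β) (h : condH Z W = 0) :
    ∀ ω₁ ω₂ : Ω, W ω₁ = W ω₂ → Z ω₁ = Z ω₂ := by
  intro ω₁ ω₂ hW
  by_contra hne
  have hlog : Real.log 2 ≠ 0 := ne_of_gt (Real.log_pos one_lt_two)
  have hent : ∑ w : β, ∑ z : α, Real.negMulLog (prob (fun ω => (Z ω, W ω)) (z, w))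
      = ∑ w : β, Real.negMulLog (prob W w) := by
    have h2 : Hent (fun ω => (Z ω, W ω)) = Hent W := by
      have := sub_eq_zero.mp h; exact this
    unfold Hent at h2
    rw [div_eq_div_iff hlog hlog] at h2
    have h3 := mul_right_cancel₀ hlog h2
    rw [← h3, Fintype.sum_prod_type, Finset.sum_comm]
  have hterm : ∀ w : β, (0:ℝ) ≤ (∑ z : α, Real.negMulLog (prob (fun ω => (Z ω, W ω)) (z, w)))
      - Real.negMulLog (prob W w) := by
    intro w
    rw [sub_nonneg, prob_snd_eq_sum Z W w]
    exact negMulLog_sum_le _ _ fun z _ => prob_nonneg _ _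
  have hzero : ∀ w : β, (∑ z : α, Real.negMulLog (prob (fun ω => (Z ω, W ω)) (z, w)))
      - Real.negMulLog (prob W w) = 0 := by
    have hs : ∑ w : β, ((∑ z : α, Real.negMulLog (prob (fun ω => (Z ω, W ω)) (z, w)))
        - Real.negMulLog (prob W w)) = 0 := by
      rw [Finset.sum_sub_distrib, hent, sub_self]
    intro w
    exact (Finset.sum_eq_zero_iff_of_nonneg (fun w _ => hterm w)).mp hs w (Finset.mem_univ w)
  have hstrict : Real.negMulLog (∑ z : α, prob (fun ω => (Z ω, W ω)) (z, W ω₁))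
      < ∑ z : α, Real.negMulLog (prob (fun ω => (Z ω, W ω)) (z, W ω₁)) := by
    refine negMulLog_sum_lt _ _ (fun z _ => prob_nonneg _ _) (Finset.mem_univ (Z ω₁))
      (Finset.mem_univ (Z ω₂)) hne ?_ ?_
    · exact prob_pos (fun ω => (Z ω, W ω)) ω₁
    · rw [hW]; exact prob_pos (fun ω => (Z ω, W ω)) ω₂
  rw [← prob_snd_eq_sum Z W (W ω₁)] at hstrict
  have := hzero (W ω₁)
  rw [prob_snd_eq_sum Z W (W ω₁)] at this
  linarith [hstrict, hzero (W ω₁), (prob_snd_eq_sum Z W (W ω₁))]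

lemma sum_prob_eq_one {Ω : Type*} [Fintype Ω] [Nonempty Ω] {α : Type*} [Fintype α] (Z : Ω → α) :
    ∑ z : α, prob Z z = 1 := by
  unfold prob
  rw [← Finset.sum_div]
  rw [div_eq_one_iff_eq (by exact_mod_cast Fintype.card_ne_zero)]
  norm_cast
  rw [← Finset.card_eq_sum_card_fiberwise (f := Z) (t := Finset.univ) (fun x _ => Finset.mem_univ _)]
  exact Finset.card_univ

lemma condH_mul_log2 {Ω : Type*} [Fintype Ω] {α β : Type*} [Fintype α] [Fintype β]
    (Z : Ω → α) (W : Ω → β) :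
    condH Z W * Real.log 2
      = ∑ w : β, ((∑ z : α, Real.negMulLog (prob (fun ω => (Z ω, W ω)) (z, w)))
          - Real.negMulLog (prob W w)) := by
  have hlog : Real.log 2 ≠ 0 := ne_of_gt (Real.log_pos one_lt_two)
  unfold condH Hent
  rw [Finset.sum_sub_distrib]
  field_simp
  rw [Fintype.sum_prod_type, Finset.sum_comm]

lemma condH_id_mul_log2 {Ω : Type*} [Fintype Ω] [Nonempty Ω] {β : Type*} [Fintype β] (W : Ω → β) :
    condH (fun ω : Ω => ω) W * Real.log 2
      = ∑ w : β, (prob W w * Real.log (Fintype.card Ω) - Real.negMulLog (prob W w)) := by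
  rw [condH_mul_log2]
  refine Finset.sum_congr rfl fun w _ => ?_
  congr 1
  -- ∑ z : Ω, negMulLog (prob (fun ω => (ω, W ω)) (z, w)) = prob W w * log N
  have hN : (0:ℝ) < (Fintype.card Ω : ℝ) := by exact_mod_cast Fintype.card_pos
  have hprob : ∀ z : Ω, prob (fun ω => (ω, W ω)) (z, w)
      = if W z = w then (1 : ℝ) / (Fintype.card Ω : ℝ) else 0 := by
    intro z
    unfold prob
    beta_reduce
    split_ifs with h
    · congr 1
      norm_cast
      rw [Finset.card_eq_one]
      refine ⟨z, ?_⟩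
      ext ω
      simp only [Finset.mem_filter, Finset.mem_univ, true_and, Finset.mem_singleton,
        Prod.mk.injEq]
      constructor
      · rintro ⟨h1, _⟩; exact h1
      · rintro rfl; exact ⟨rfl, h⟩
    · rw [div_eq_zero_iff]
      left
      norm_cast
      rw [Finset.card_eq_zero, Finset.eq_empty_iff_forall_notMem]
      intro ω hω
      simp only [Finset.mem_filter, Finset.mem_univ, true_and, Prod.mk.injEq] at hω
      exact h (hω.1 ▸ hω.2)
  have hcount : ∑ z : Ω, prob (fun ω => (ω, W ω)) (z, w) = prob W w := by
    rw [← prob_snd_eq_sum (fun ω : Ω => ω) W w]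
  calc ∑ z : Ω, Real.negMulLog (prob (fun ω => (ω, W ω)) (z, w))
      = ∑ z : Ω, (if W z = w then (1:ℝ)/(Fintype.card Ω : ℝ) else 0) * Real.log (Fintype.card Ω) := by
        refine Finset.sum_congr rfl fun z _ => ?_
        rw [hprob z]
        split_ifs with h
        · rw [Real.negMulLog, one_div, Real.log_inv]; ring
        · simp
    _ = (∑ z : Ω, prob (fun ω => (ω, W ω)) (z, w)) * Real.log (Fintype.card Ω) := by
        rw [← Finset.sum_mul]
        congr 1
        exact Finset.sum_congr rfl fun z _ => (hprob z).symm
    _ = prob W w * Real.log (Fintype.card Ω) := by rw [hcount]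

lemma gibbs_core {ι : Type*} [Fintype ι] [DecidableEq ι] [Nonempty ι] {σ : ι → Type*}
    [∀ i, Fintype (σ i)] [∀ i, Nonempty (σ i)] {𝒴 : Type*}
    (fY : (∀ i, σ i) → 𝒴) (y : 𝒴)
    (A : Finset (∀ i, σ i)) (hA : A = Finset.univ.filter fun x => fY x = y)
    (N : ℝ) (hN : N = Fintype.card (∀ i, σ i))
    (P : ℝ) (hP : P = (A.card : ℝ) / N)
    (cc : (i : ι) → σ i → ℝ)
    (hcc : ∀ i z, cc i z = ((A.filter fun x => x i = z).card : ℝ) / N) :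
    0 ≤ (∑ i, ((∑ z, Real.negMulLog (cc i z)) - Real.negMulLog P))
        - (P * Real.log N - Real.negMulLog P)
    ∧ ((∑ i, ((∑ z, Real.negMulLog (cc i z)) - Real.negMulLog P))
        - (P * Real.log N - Real.negMulLog P) = 0 →
      ∀ x : ∀ i, σ i, (∀ i, 0 < cc i (x i)) → fY x = y) := by
  have hNpos : (0:ℝ) < N := by rw [hN]; exact_mod_cast Fintype.card_pos
  rcases Finset.eq_empty_or_nonempty A with hAe | hAne
  · have hcc0 : ∀ i z, cc i z = 0 := by intro i z; rw [hcc]; simp [hAe]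
    have hP0 : P = 0 := by rw [hP, hAe]; simp
    constructor
    · simp [hcc0, hP0]
    · intro _ x hx
      have i := Classical.arbitrary ι
      exact absurd (hx i) (by rw [hcc0]; simp)
  · have haPos : 0 < (A.card : ℝ) := by exact_mod_cast Finset.card_pos.mpr hAne
    have hPpos : 0 < P := by rw [hP]; positivity
    set k := Fintype.card ι with hk
    have hk1 : 1 ≤ k := Fintype.card_pos
    have hccNN : ∀ i z, 0 ≤ cc i z := fun i z => by rw [hcc]; positivity
    have hS1 : ∀ i, ∑ z, cc i z = P := by
      intro i
      rw [hP]
      simp_rw [hcc]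
      rw [← Finset.sum_div]
      congr 1
      norm_cast
      exact (Finset.card_eq_sum_card_fiberwise (s := A) (f := fun x => x i)
        (t := Finset.univ) fun x _ => Finset.mem_univ _).symm
    set q : (∀ i, σ i) → ℝ := fun x => (∏ i, cc i (x i)) / P ^ (k-1) with hq
    have hqNN : ∀ x, 0 ≤ q x := fun x =>
      div_nonneg (Finset.prod_nonneg fun i _ => hccNN _ _) (le_of_lt (pow_pos hPpos _))
    have hS2 : ∑ x : (∀ i, σ i), ∏ i, cc i (x i) = P ^ k := by
      have h := Finset.prod_univ_sum (fun i => (Finset.univ : Finset (σ i))) (fun i z => cc i z)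
      rw [Fintype.piFinset_univ] at h
      rw [← h]
      simp [hS1, hk]
    have hS3 : ∑ x : (∀ i, σ i), q x = P := by
      simp only [hq]
      rw [← Finset.sum_div, hS2]
      have hPk : P ^ k = P ^ (k-1) * P := by rw [← pow_succ, Nat.sub_add_cancel hk1]
      rw [hPk]
      field_simp
    have hS5 : ∀ x ∈ A, ∀ i, 1/N ≤ cc i (x i) := by
      intro x hx i
      rw [hcc]
      apply (div_le_div_iff_of_pos_right hNpos).mpr
      have hmem : x ∈ A.filter fun x' => x' i = x i := Finset.mem_filter.mpr ⟨hx, rfl⟩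
      exact_mod_cast Finset.card_pos.mpr ⟨x, hmem⟩
    have hccApos : ∀ x ∈ A, ∀ i, 0 < cc i (x i) := fun x hx i =>
      lt_of_lt_of_le (by positivity) (hS5 x hx i)
    have hqApos : ∀ x ∈ A, 0 < q x := by
      intro x hx
      exact div_pos (Finset.prod_pos fun i _ => hccApos x hx i) (pow_pos hPpos _)
    have hS6 : ∀ x ∈ A, Real.log (q x * N)
        = (∑ i, Real.log (cc i (x i))) - ((k-1 : ℕ) : ℝ) * Real.log P + Real.log N := by
      intro x hx
      rw [Real.log_mul (ne_of_gt (hqApos x hx)) (ne_of_gt hNpos)]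
      congr 1
      simp only [hq]
      rw [Real.log_div (ne_of_gt (Finset.prod_pos fun i _ => hccApos x hx i))
        (ne_of_gt (pow_pos hPpos _)),
        Real.log_prod (fun i _ => ne_of_gt (hccApos x hx i)), Real.log_pow]
    have hfib : ∀ (i : ι) (g : σ i → ℝ), ∑ x ∈ A, g (x i)
        = ∑ z, ((A.filter fun x => x i = z).card : ℝ) * g z := by
      intro i g
      rw [← Finset.sum_fiberwise A (fun x => x i) (fun x => g (x i))]
      refine Finset.sum_congr rfl fun z _ => ?_
      have hcg : ∀ x ∈ A.filter fun x => x i = z, g (x i) = g z := by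
        intro x hx
        rw [(Finset.mem_filter.mp hx).2]
      rw [Finset.sum_congr rfl hcg, Finset.sum_const, nsmul_eq_mul]
    have hT1 : ∀ i : ι, ∑ x ∈ A, (1/N) * Real.log (cc i (x i))
        = ∑ z, (- Real.negMulLog (cc i z)) := by
      intro i
      rw [← Finset.mul_sum, hfib i (fun z => Real.log (cc i z)), Finset.mul_sum]
      refine Finset.sum_congr rfl fun z _ => ?_
      rw [Real.negMulLog, hcc]
      ring
    have hS7 : ∑ x ∈ A, (1/N) * Real.log (q x * N)
        = -((∑ i, ((∑ z, Real.negMulLog (cc i z)) - Real.negMulLog P))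
            - (P * Real.log N - Real.negMulLog P)) := by
      rw [Finset.sum_congr rfl (fun x hx => by rw [hS6 x hx])]
      have hexp : ∀ x ∈ A, (1/N) * ((∑ i, Real.log (cc i (x i)))
          - ((k-1 : ℕ) : ℝ) * Real.log P + Real.log N)
          = (∑ i, (1/N) * Real.log (cc i (x i)))
            - (1/N) * (((k-1 : ℕ) : ℝ) * Real.log P) + (1/N) * Real.log N := by
        intro x _
        rw [mul_add, mul_sub, Finset.mul_sum]
      rw [Finset.sum_congr rfl hexp]
      rw [Finset.sum_add_distrib, Finset.sum_sub_distrib, Finset.sum_comm]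
      rw [Finset.sum_congr rfl (fun i _ => hT1 i), Finset.sum_const, Finset.sum_const,
        nsmul_eq_mul, nsmul_eq_mul]
      have hsplit : (∑ i, ((∑ z, Real.negMulLog (cc i z)) - Real.negMulLog P))
          = (∑ i, ∑ z, Real.negMulLog (cc i z)) - (k : ℝ) * Real.negMulLog P := by
        rw [Finset.sum_sub_distrib, Finset.sum_const, nsmul_eq_mul, Finset.card_univ]
      rw [hsplit]
      have hksub : ((k - 1 : ℕ) : ℝ) = (k : ℝ) - 1 := by
        push_cast [hk1]
        ring
      have hnml : Real.negMulLog P = -P * Real.log P := rfl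
      have hsumneg : (∑ i : ι, ∑ z, (- Real.negMulLog (cc i z)))
          = - ∑ i : ι, ∑ z, Real.negMulLog (cc i z) := by
        rw [← Finset.sum_neg_distrib]
        exact Finset.sum_congr rfl fun i _ => by rw [← Finset.sum_neg_distrib]
      rw [hsumneg, hksub, hnml, hP]
      field_simp
      ring
    have hS8 : ∑ x ∈ A, (1/N) * Real.log (q x * N) ≤ (∑ x ∈ A, q x) - P := by
      have hterm : ∀ x ∈ A, (1/N) * Real.log (q x * N) ≤ q x - 1/N := by
        intro x hx
        have hpos : 0 < q x * N := mul_pos (hqApos x hx) hNpos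
        have hlog := Real.log_le_sub_one_of_pos hpos
        have h2 : (1/N) * Real.log (q x * N) ≤ (1/N) * (q x * N - 1) :=
          mul_le_mul_of_nonneg_left hlog (by positivity)
        have h3 : (1/N) * (q x * N - 1) = q x - 1/N := by field_simp
        linarith
      calc ∑ x ∈ A, (1/N) * Real.log (q x * N) ≤ ∑ x ∈ A, (q x - 1/N) :=
            Finset.sum_le_sum hterm
        _ = (∑ x ∈ A, q x) - P := by
            rw [Finset.sum_sub_distrib, Finset.sum_const, nsmul_eq_mul, hP]
            ring
    have hS9 : (∑ x ∈ A, q x) ≤ P := by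
      rw [← hS3]
      exact Finset.sum_le_sum_of_subset_of_nonneg (Finset.subset_univ A) fun x _ _ => hqNN x
    constructor
    · linarith [hS7, hS8, hS9]
    · intro h0 x hx
      have hLHS : ∑ z ∈ A, (1/N) * Real.log (q z * N) = 0 := by rw [hS7, h0, neg_zero]
      have heq : ∑ z ∈ A, q z = P := by linarith [hS8, hS9]
      have hsd : ∑ z ∈ Finset.univ \ A, q z = 0 := by
        have hh := Finset.sum_sdiff (f := q) (Finset.subset_univ A)
        rw [heq, hS3] at hh
        linarith
      have hzero : ∀ z ∈ Finset.univ \ A, q z = 0 := fun z hz =>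
        (Finset.sum_eq_zero_iff_of_nonneg fun z _ => hqNN z).mp hsd z hz
      have hxA : x ∈ A := by
        by_contra hxA
        have h1 : q x = 0 := hzero x (Finset.mem_sdiff.mpr ⟨Finset.mem_univ x, hxA⟩)
        have h2 : 0 < q x := div_pos (Finset.prod_pos fun i _ => hx i) (pow_pos hPpos _)
        linarith
      rw [hA] at hxA
      exact (Finset.mem_filter.mp hxA).2

lemma indep_fiber {ι : Type*} [Fintype ι] [DecidableEq ι] {σ : ι → Type*}
    [∀ i, Fintype (σ i)] [∀ i, Nonempty (σ i)] {𝒴 : Type*} [Fintype 𝒴]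
    (fY : (∀ i, σ i) → 𝒴)
    (hB : condH (fun x : ∀ i, σ i => x) fY = ∑ i, condH (fun x : ∀ i, σ i => x i) fY)
    (y' : 𝒴) (hy : ∃ z, fY z = y')
    (x : ∀ i, σ i) (hx : ∀ i, ∃ z, fY z = y' ∧ z i = x i) : fY x = y' := by
  cases isEmpty_or_nonempty ι with
  | inl h =>
    obtain ⟨z, hz⟩ := hy
    have hxz : x = z := funext fun i => (h.false i).elim
    rw [hxz]; exact hz
  | inr hι =>
    have hne : Nonempty (∀ i, σ i) := ⟨fun i => Classical.arbitrary _⟩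
    set N : ℝ := (Fintype.card (∀ i, σ i) : ℝ) with hN
    set ccf : 𝒴 → (i : ι) → σ i → ℝ :=
      fun y i z => prob (fun x : ∀ j, σ j => (x i, fY x)) (z, y) with hccf
    have hlink : ∀ (y : 𝒴) (i : ι) (z : σ i), ccf y i z
        = (((Finset.univ.filter fun x : ∀ j, σ j => fY x = y).filter
            fun x => x i = z).card : ℝ) / N := by
      intro y i z
      rw [hccf]
      unfold prob
      refine congrArg (fun m : ℕ => (m : ℝ) / N) (congrArg Finset.card ?_)
      ext w
      simp only [Finset.mem_filter, Finset.mem_univ, true_and, Prod.mk.injEq]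
      exact and_comm
    set gap : 𝒴 → ℝ := fun y =>
      (∑ i, ((∑ z, Real.negMulLog (ccf y i z)) - Real.negMulLog (prob fY y)))
        - (prob fY y * Real.log N - Real.negMulLog (prob fY y)) with hgap
    have hcore : ∀ y : 𝒴, (0 ≤ gap y) ∧ (gap y = 0 →
        ∀ x : ∀ i, σ i, (∀ i, 0 < ccf y i (x i)) → fY x = y) := by
      intro y
      exact gibbs_core fY y _ rfl N hN (prob fY y) rfl (ccf y) (hlink y)
    have hsum0 : ∑ y : 𝒴, gap y = 0 := by
      have h1 : ∑ y : 𝒴, (∑ i, ((∑ z, Real.negMulLog (ccf y i z))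
          - Real.negMulLog (prob fY y)))
          = (∑ i, condH (fun x : ∀ j, σ j => x i) fY) * Real.log 2 := by
        rw [Finset.sum_comm, Finset.sum_mul]
        refine Finset.sum_congr rfl fun i _ => ?_
        rw [condH_mul_log2]
      have h2 : ∑ y : 𝒴, (prob fY y * Real.log N - Real.negMulLog (prob fY y))
          = condH (fun x : ∀ i, σ i => x) fY * Real.log 2 := by
        rw [condH_id_mul_log2]
      simp only [hgap]
      rw [Finset.sum_sub_distrib, h1, h2, hB]
      ring
    have hgapz : gap y' = 0 :=
      (Finset.sum_eq_zero_iff_of_nonneg fun y _ => (hcore y).1).mp hsum0 y' (Finset.mem_univ y')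
    refine (hcore y').2 hgapz x fun i => ?_
    obtain ⟨z, hz1, hz2⟩ := hx i
    rw [hlink]
    have hmem : z ∈ (Finset.univ.filter fun x' : ∀ j, σ j => fY x' = y').filter
        fun x' => x' i = x i :=
      Finset.mem_filter.mpr ⟨Finset.mem_filter.mpr ⟨Finset.mem_univ _, hz1⟩, hz2⟩
    have hcpos : (0:ℝ) < (((Finset.univ.filter fun x' : ∀ j, σ j => fY x' = y').filter
        fun x' => x' i = x i).card : ℝ) := by
      exact_mod_cast Finset.card_pos.mpr ⟨z, hmem⟩
    have hNpos : (0:ℝ) < N := by rw [hN]; exact_mod_cast Fintype.card_pos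
    positivity


section Build

variable {I : NetworkInstance} {R : I.V → ℝ} {n : ℕ} (C : NetworkCode I R n)
  (estar : I.V × I.V) {𝒴 : Type} (fY : C.Msg → 𝒴) (ycur : 𝒴)

/-- The set `A_s(y')` of source-`s` values compatible with `Y = y'`. -/
def Bset (s : {v // v ∈ I.S}) : Finset (C.srcA s.1) :=
  (Finset.univ.filter fun x : C.Msg => fY x = ycur).image fun x => x s

/-- Restricted source alphabets. -/
abbrev srcA' : I.V → Type :=
  fun v => {a : C.srcA v // ∀ h : v ∈ I.S, a ∈ Bset C fY ycur ⟨v, h⟩}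

instance : ∀ v, Fintype (srcA' C fY ycur v) := fun _ => Subtype.fintype _

/-- Embedding of restricted message vectors into the original message space. -/
def iotaMsg (x' : (s : {v // v ∈ I.S}) → srcA' C fY ycur s.1) : C.Msg :=
  fun s => (x' s).1

lemma iotaMsg_inj : Function.Injective (iotaMsg C fY ycur) := by
  intro a b h
  funext s
  exact Subtype.ext (congrFun h s)

lemma exists_iota (z : C.Msg) (hz : fY z = ycur) :
    ∃ x' : (s : {v // v ∈ I.S}) → srcA' C fY ycur s.1, iotaMsg C fY ycur x' = z :=
  ⟨fun s => ⟨z s, fun h => Finset.mem_image.mpr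
    ⟨z, Finset.mem_filter.mpr ⟨Finset.mem_univ _, hz⟩, rfl⟩⟩, rfl⟩

set_option maxHeartbeats 1000000 in
/-- The new code on `I` with edge `e*` removed. -/
def buildCode (x₀ : C.Msg)
    (hne : ∀ v, Nonempty (srcA' C fY ycur v))
    (hkey : ∀ x : C.Msg, fY x = ycur → C.ge estar x = C.ge estar x₀)
    (hfib : ∀ x', fY (iotaMsg C fY ycur x') = ycur)
    (hrate : ∀ v (h : v ∈ I.S),
      (2:ℝ) ^ ((n:ℝ) * reducedRate I R estar v) ≤ ((Bset C fY ycur ⟨v,h⟩).card : ℝ)) :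
    NetworkCode (I.removeEdge estar) (reducedRate I R estar) n where
  srcA := fun v => srcA' C fY ycur v
  edgeA := fun e => C.edgeA e
  finSrc := fun (v : I.V) => Subtype.fintype _
  finEdge := fun e => C.finEdge e
  neSrc := fun v => hne v
  neEdge := fun e => C.neEdge e
  ge := fun e x' => C.ge e (iotaMsg C fY ycur x')
  dec := fun t g s =>
    if h : ∀ hh : s.1 ∈ I.S, (C.dec t (fun f : {e : I.V × I.V // e ∈ I.E ∧ e.2 = t.1} =>
        if hf : f.1 ∈ I.E.erase estar
        then g ⟨f.1, ⟨hf, f.2.2⟩⟩ else C.ge f.1 x₀) s) ∈ Bset C fY ycur ⟨s.1, hh⟩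
    then ⟨_, h⟩ else Classical.choice (hne s.1)
  local_enc := by
    intro e heE x' y' hsrc hedge
    apply C.local_enc e (Finset.mem_of_mem_erase heE)
    · intro s hs
      exact congrArg Subtype.val (hsrc s hs)
    · intro f hf hf2
      by_cases hfe : f = estar
      · subst hfe
        rw [hkey _ (hfib x'), hkey _ (hfib y')]
      · exact hedge f (Finset.mem_erase.mpr ⟨hfe, hf⟩) hf2
  rate := by
    intro (v : I.V) hv
    have h1 := hrate v hv
    have hcard : (Fintype.card (srcA' C fY ycur v) : ℝ) = ((Bset C fY ycur ⟨v, hv⟩).card : ℝ) := by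
      norm_cast
      unfold srcA'
      rw [Fintype.card_subtype]
      congr 1
      ext a
      simp only [Finset.mem_filter, Finset.mem_univ, true_and]
      exact ⟨fun H => H hv, fun H _ => H⟩
    rw [hcard]
    exact h1
  capBound := fun e heE => C.capBound e (Finset.mem_of_mem_erase heE)

lemma buildCode_correct (x₀ : C.Msg)
    (hne : ∀ v, Nonempty (srcA' C fY ycur v))
    (hkey : ∀ x : C.Msg, fY x = ycur → C.ge estar x = C.ge estar x₀)
    (hfib : ∀ x', fY (iotaMsg C fY ycur x') = ycur)
    (hrate : ∀ v (h : v ∈ I.S),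
      (2:ℝ) ^ ((n:ℝ) * reducedRate I R estar v) ≤ ((Bset C fY ycur ⟨v,h⟩).card : ℝ))
    (t : {v // v ∈ I.T})
    (x' : (s : {v // v ∈ I.S}) → srcA' C fY ycur s.1)
    (hc : C.Correct t (iotaMsg C fY ycur x')) :
    (buildCode C estar fY ycur x₀ hne hkey hfib hrate).Correct t x' := by
  unfold NetworkCode.Correct at hc ⊢
  unfold buildCode
  dsimp only
  funext s
  have hgt : (fun f : {e : I.V × I.V // e ∈ I.E ∧ e.2 = t.1} =>
      if hf : f.1 ∈ I.E.erase estar then C.ge f.1 (iotaMsg C fY ycur x') else C.ge f.1 x₀)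
      = fun f : {e : I.V × I.V // e ∈ I.E ∧ e.2 = t.1} => C.ge f.1 (iotaMsg C fY ycur x') := by
    funext f
    split_ifs with hf
    · rfl
    · have hfe : f.1 = estar := by
        by_contra hfe
        exact hf (Finset.mem_erase.mpr ⟨hfe, f.2.1⟩)
      rw [hfe]
      exact (hkey _ (hfib x')).symm
  have hval : C.dec t (fun f : {e : I.V × I.V // e ∈ I.E ∧ e.2 = t.1} =>
      if hf : f.1 ∈ I.E.erase estar
      then C.ge f.1 (iotaMsg C fY ycur x') else C.ge f.1 x₀) s = (x' ⟨s.1, s.2.1⟩).1 := by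
    rw [hgt]
    exact congrFun hc s
  have hcond : ∀ hh : s.1 ∈ I.S, (C.dec t (fun f : {e : I.V × I.V // e ∈ I.E ∧ e.2 = t.1} =>
      if hf : f.1 ∈ I.E.erase estar
      then C.ge f.1 (iotaMsg C fY ycur x') else C.ge f.1 x₀) s) ∈ Bset C fY ycur ⟨s.1, hh⟩ := by
    intro hh
    rw [hval]
    exact (x' ⟨s.1, s.2.1⟩).2 hh
  rw [dif_pos hcond]
  exact Subtype.ext hval

end Build

/-- **Theorem 1 (sufficient condition for local edge removal).**
If `I` is `(ε,R,n)`-feasible with code `C`, `e*` an edge of `I`, and there is a random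
variable `Y = f_Y(X_S)` with (A) `H(X_{e*}|Y) = 0`, (B) `H(X_S|Y) = Σ_i H(X_i|Y)`, and
(C) some `y'` with `|A_i(y')| ≥ |𝒳_i|/|𝒳_{e*}|` for all `i ∈ S` and `|A^B(y')| ≤ ε|A(y')|`,
then removing `e*` leaves the instance `(ε, R - R_{e*}·1, n)`-feasible. -/
theorem local_edge_removal_of_aux_rv
    (I : NetworkInstance) (ε : ℝ) (R : I.V → ℝ) (n : ℕ)
    (C : NetworkCode I R n) (hfeas : C.Achieves ε)
    (estar : I.V × I.V) (he : estar ∈ I.E)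
    (𝒴 : Type) [Fintype 𝒴] (fY : C.Msg → 𝒴)
    (hA : condH (C.ge estar) fY = 0)
    (hB : condH (fun x : C.Msg => x) fY
        = ∑ s : {v // v ∈ I.S}, condH (fun x : C.Msg => x s) fY)
    (hC : ∃ y' : 𝒴,
      (∀ s : {v // v ∈ I.S},
        (Fintype.card (C.srcA s.1) : ℝ) / (Fintype.card (C.edgeA estar) : ℝ) ≤
          (((Finset.univ.filter fun x : C.Msg => fY x = y').image fun x => x s).card : ℝ)) ∧
      ((Finset.univ.filter fun x : C.Msg => fY x = y' ∧ ¬ C.Good x).card : ℝ) ≤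
        ε * ((Finset.univ.filter fun x : C.Msg => fY x = y').card : ℝ)) :
    Feasible (I.removeEdge estar) ε (reducedRate I R estar) n :=  by
  classical
  obtain ⟨y0, hC1, hC2⟩ := hC
  have hkey0 : ∀ x₁ x₂ : C.Msg, fY x₁ = fY x₂ → C.ge estar x₁ = C.ge estar x₂ :=
    determ_of_condH_zero (C.ge estar) fY hA
  have main : ∀ ycur : 𝒴,
      (∀ x : C.Msg, (∀ s : {v // v ∈ I.S}, ∃ z : C.Msg, fY z = ycur ∧ z s = x s) →
        fY x = ycur) →
      (∀ s : {v // v ∈ I.S},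
        (Fintype.card (C.srcA s.1) : ℝ) / (Fintype.card (C.edgeA estar) : ℝ) ≤
          ((Bset C fY ycur s).card : ℝ)) →
      ((0 ≤ ε) → ((Finset.univ.filter fun x : C.Msg => fY x = ycur ∧ ¬ C.Good x).card : ℝ) ≤
        ε * ((Finset.univ.filter fun x : C.Msg => fY x = ycur).card : ℝ)) →
      Feasible (I.removeEdge estar) ε (reducedRate I R estar) n := by
    intro ycur K3 K2 K4
    -- nonemptiness of the restricted alphabets
    have hne : ∀ v, Nonempty (srcA' C fY ycur v) := by
      intro v
      by_cases hv : v ∈ I.S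
      · have hpos : (0:ℝ) < (Fintype.card (C.srcA v) : ℝ) / (Fintype.card (C.edgeA estar) : ℝ) := by
          have h1 : (0:ℝ) < (Fintype.card (C.srcA v) : ℝ) := by exact_mod_cast Fintype.card_pos
          have h2 : (0:ℝ) < (Fintype.card (C.edgeA estar) : ℝ) := by exact_mod_cast Fintype.card_pos
          positivity
        have h3 := lt_of_lt_of_le hpos (K2 ⟨v, hv⟩)
        have h4 : (Bset C fY ycur ⟨v, hv⟩).Nonempty := by
          rw [← Finset.card_pos]
          exact_mod_cast h3
        obtain ⟨a, ha⟩ := h4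
        exact ⟨⟨a, fun _ => ha⟩⟩
      · exact ⟨⟨Classical.arbitrary _, fun h => absurd h hv⟩⟩
    -- the embedded messages land in the fiber
    have hfib : ∀ x', fY (iotaMsg C fY ycur x') = ycur := by
      intro x'
      apply K3
      intro s
      obtain ⟨z, hz, hzs⟩ := Finset.mem_image.mp ((x' s).2 s.2)
      exact ⟨z, (Finset.mem_filter.mp hz).2, hzs⟩
    -- fixed embedded message
    obtain ⟨x'₀⟩ : Nonempty ((s : {v // v ∈ I.S}) → srcA' C fY ycur s.1) :=
      ⟨fun s => Classical.choice (hne s.1)⟩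
    have hkey : ∀ x : C.Msg, fY x = ycur → C.ge estar x = C.ge estar (iotaMsg C fY ycur x'₀) := by
      intro x hx
      exact hkey0 x _ (by rw [hx, hfib x'₀])
    -- rate bound
    have hrate : ∀ v (h : v ∈ I.S),
        (2:ℝ) ^ ((n:ℝ) * reducedRate I R estar v) ≤ ((Bset C fY ycur ⟨v,h⟩).card : ℝ) := by
      intro v hv
      have hBpos : (0:ℝ) < ((Bset C fY ycur ⟨v, hv⟩).card : ℝ) := by
        have := hne v
        obtain ⟨⟨a, ha⟩⟩ := this
        exact_mod_cast Finset.card_pos.mpr ⟨a, ha hv⟩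
      unfold reducedRate
      rcases le_or_gt (R v) (I.cap estar) with hle | hlt
      · rw [max_eq_left (by linarith), mul_zero, Real.rpow_zero]
        exact_mod_cast Finset.card_pos.mpr (by
          obtain ⟨⟨a, ha⟩⟩ := hne v
          exact ⟨a, ha hv⟩)
      · rw [max_eq_right (by linarith)]
        have hsplit : (2:ℝ) ^ ((n:ℝ) * (R v - I.cap estar))
            = (2:ℝ) ^ ((n:ℝ) * R v) / (2:ℝ) ^ ((n:ℝ) * I.cap estar) := by
          rw [← Real.rpow_sub two_pos]
          ring_nf
        rw [hsplit]
        have hedge : (0:ℝ) < (Fintype.card (C.edgeA estar) : ℝ) := by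
          exact_mod_cast Fintype.card_pos
        calc (2:ℝ) ^ ((n:ℝ) * R v) / (2:ℝ) ^ ((n:ℝ) * I.cap estar)
            ≤ (Fintype.card (C.srcA v) : ℝ) / (Fintype.card (C.edgeA estar) : ℝ) :=
              div_le_div₀ (Nat.cast_nonneg _) (C.rate v hv) hedge (C.capBound estar he)
          _ ≤ ((Bset C fY ycur ⟨v, hv⟩).card : ℝ) := K2 ⟨v, hv⟩
    refine ⟨buildCode C estar fY ycur (iotaMsg C fY ycur x'₀) hne hkey hfib hrate, ?_⟩
    -- Achieves
    intro t
    have hMsgpos : (0:ℝ) < (Fintype.card C.Msg : ℝ) := by exact_mod_cast Fintype.card_pos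
    have hε : 0 ≤ ε := by
      have h1 := hfeas t
      have h2 : (0:ℝ) ≤ ε * (Fintype.card C.Msg : ℝ) :=
        le_trans (Nat.cast_nonneg _) h1
      nlinarith
    -- bound the error count via the embedding
    have hstep1 : ((Finset.univ.filter fun x' : (s : {v // v ∈ I.S}) → srcA' C fY ycur s.1 =>
        ¬ (buildCode C estar fY ycur (iotaMsg C fY ycur x'₀) hne hkey hfib hrate).Correct t x').card : ℝ)
        ≤ ((Finset.univ.filter fun x : C.Msg => fY x = ycur ∧ ¬ C.Good x).card : ℝ) := by
      norm_cast
      apply Finset.card_le_card_of_injOn (iotaMsg C fY ycur)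
      · intro x' hx'
        simp only [Finset.mem_coe, Finset.mem_filter] at hx' ⊢
        refine ⟨Finset.mem_univ _, hfib x', ?_⟩
        intro hgood
        exact hx'.2 (buildCode_correct C estar fY ycur _ hne hkey hfib hrate t x' (hgood t))
      · exact fun a _ b _ h => iotaMsg_inj C fY ycur h
    have hstep2 : ((Finset.univ.filter fun x : C.Msg => fY x = ycur).card : ℝ)
        ≤ (Fintype.card ((s : {v // v ∈ I.S}) → srcA' C fY ycur s.1) : ℝ) := by
      norm_cast
      calc (Finset.univ.filter fun x : C.Msg => fY x = ycur).card
          ≤ (Finset.univ.image (iotaMsg C fY ycur)).card := by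
            apply Finset.card_le_card
            intro z hz
            obtain ⟨x', hx'⟩ := exists_iota C fY ycur z (Finset.mem_filter.mp hz).2
            exact Finset.mem_image.mpr ⟨x', Finset.mem_univ _, hx'⟩
        _ ≤ Finset.univ.card := Finset.card_image_le
        _ = Fintype.card _ := Finset.card_univ
    calc _
        ≤ ((Finset.univ.filter fun x : C.Msg => fY x = ycur ∧ ¬ C.Good x).card : ℝ) := by
          convert hstep1 using 4
          · rfl
          · rfl
          · exact heq_of_eq (congrArg (@Finset.univ _) (Subsingleton.elim _ _))
      _ ≤ ε * ((Finset.univ.filter fun x : C.Msg => fY x = ycur).card : ℝ) := K4 hε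
      _ ≤ ε * (Fintype.card ((s : {v // v ∈ I.S}) → srcA' C fY ycur s.1) : ℝ) :=
          mul_le_mul_of_nonneg_left hstep2 hε
  by_cases hfib0 : ∃ z : C.Msg, fY z = y0
  · apply main y0
    · intro x hx
      exact indep_fiber fY hB y0 hfib0 x hx
    · exact hC1
    · intro _
      exact hC2
  · -- the fiber of y0 is empty, hence S = ∅
    have hS : I.S = ∅ := by
      by_contra hS
      obtain ⟨v, hv⟩ := Finset.nonempty_iff_ne_empty.mpr hS
      have h1 := hC1 ⟨v, hv⟩
      have himg : (Finset.univ.filter fun x : C.Msg => fY x = y0) = ∅ := by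
        rw [Finset.eq_empty_iff_forall_notMem]
        intro x hx
        exact hfib0 ⟨x, (Finset.mem_filter.mp hx).2⟩
      rw [himg] at h1
      simp only [Finset.image_empty, Finset.card_empty, Nat.cast_zero] at h1
      have h2 : (0:ℝ) < (Fintype.card (C.srcA v) : ℝ) / (Fintype.card (C.edgeA estar) : ℝ) := by
        have ha : (0:ℝ) < (Fintype.card (C.srcA v) : ℝ) := by exact_mod_cast Fintype.card_pos
        have hb : (0:ℝ) < (Fintype.card (C.edgeA estar) : ℝ) := by exact_mod_cast Fintype.card_pos
        positivity
      linarith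
    have hSempty : ∀ s : {v // v ∈ I.S}, False := by
      intro s
      rw [hS] at s
      exact absurd s.2 (Finset.notMem_empty s.1)
    have x₀ : C.Msg := fun s => (hSempty s).elim
    have hMsg : ∀ x : C.Msg, x = x₀ := by
      intro x
      funext s
      exact (hSempty s).elim
    apply main (fY x₀)
    · intro x _
      rw [hMsg x]
    · intro s
      exact (hSempty s).elim
    · intro hε
      have hbad : (Finset.univ.filter fun x : C.Msg => fY x = fY x₀ ∧ ¬ C.Good x) = ∅ := by
        rw [Finset.eq_empty_iff_forall_notMem]
        intro x hx
        apply (Finset.mem_filter.mp hx).2.2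
        intro t'
        unfold NetworkCode.Correct
        funext s
        rw [hS] at s
        exact absurd s.2.1 (Finset.notMem_empty s.1)
      rw [hbad]
      simp only [Finset.card_empty, Nat.cast_zero]
      positivity


end
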